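/- Consider the query q_perm^A ← A(x), R(x,y), R(y,x), with A unary and R binary, both endogenous. For every database D with D ⊨ q_perm^A, the resilience ρ(q_perm^A, D) equals the minimum size of a vertex cover of the bipartite graph whose left vertices are the elements a with A(a) ∈ D, whose right vertices are the unordered pairs {a,b} with both (a,b) ∈ R and (b,a) ∈ R, and which has an edge between a left vertex a and a right vertex p exactly when a ∈ p. -/

import Mathlib

/-!
STATEMENT 15.
Query `q_perm^A ← A(x), R(x,y), R(y,x)`, with `A` unary and `R` binary, both
endogenous.  For every database `(A, R)` satisfying the query, the resilience
equals the minimum size of a vertex cover of the bipartite graph whose left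
vertices are the elements of `A`, whose right vertices are the unordered
pairs `{a,b} : Sym2 α` with both `(a,b) ∈ R` and `(b,a) ∈ R`, with an edge
between `a` and `p` exactly when `a ∈ p`.
-/
theorem stmt_15 {α : Type} [DecidableEq α]
    (A : Finset α) (R : Finset (α × α))
    (hsat : ∃ a b, a ∈ A ∧ (a, b) ∈ R ∧ (b, a) ∈ R) :
    sInf {c : ℕ | ∃ (ΓA : Finset α) (ΓR : Finset (α × α)),
        ΓA ⊆ A ∧ ΓR ⊆ R ∧
        (¬ ∃ a b, a ∈ A \ ΓA ∧ (a, b) ∈ R \ ΓR ∧ (b, a) ∈ R \ ΓR) ∧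
        ΓA.card + ΓR.card = c} =
    sInf {c : ℕ | ∃ (CL : Finset α) (CR : Finset (Sym2 α)),
        CL ⊆ A ∧
        CR ⊆ (R.filter (fun t => (t.2, t.1) ∈ R)).image Sym2.mk.uncurry ∧
        (∀ a ∈ A, ∀ p ∈ (R.filter (fun t => (t.2, t.1) ∈ R)).image Sym2.mk.uncurry,
          a ∈ p → a ∈ CL ∨ p ∈ CR) ∧
        CL.card + CR.card = c} := by
  set P := (R.filter (fun t => (t.2, t.1) ∈ R)).image Sym2.mk.uncurry with hP
  have hPmem : ∀ p ∈ P, ∃ x y, (x, y) ∈ R ∧ (y, x) ∈ R ∧ p = Sym2.mk.uncurry (x, y) := by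
    intro p hp
    rw [hP, Finset.mem_image] at hp
    obtain ⟨t, ht, rfl⟩ := hp
    rw [Finset.mem_filter] at ht
    exact ⟨t.1, t.2, ht.1, ht.2, rfl⟩
  have hS2ne : {c : ℕ | ∃ (CL : Finset α) (CR : Finset (Sym2 α)),
        CL ⊆ A ∧ CR ⊆ P ∧
        (∀ a ∈ A, ∀ p ∈ P, a ∈ p → a ∈ CL ∨ p ∈ CR) ∧
        CL.card + CR.card = c}.Nonempty := by
    exact ⟨A.card, A, ∅, Finset.Subset.refl _, Finset.empty_subset _,
      fun a ha p _ _ => Or.inl ha, by simp⟩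
  have hS1ne : {c : ℕ | ∃ (ΓA : Finset α) (ΓR : Finset (α × α)),
        ΓA ⊆ A ∧ ΓR ⊆ R ∧
        (¬ ∃ a b, a ∈ A \ ΓA ∧ (a, b) ∈ R \ ΓR ∧ (b, a) ∈ R \ ΓR) ∧
        ΓA.card + ΓR.card = c}.Nonempty := by
    refine ⟨A.card, A, ∅, Finset.Subset.refl _, Finset.empty_subset _, ?_, by simp⟩
    rintro ⟨a, b, ha, -⟩
    simp at ha
  apply le_antisymm
  · -- resilience ≤ vertex cover
    obtain ⟨CL, CR, hCL, hCR, hcov, hc⟩ := Nat.sInf_mem hS2ne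
    set ΓR : Finset (α × α) := CR.image Quot.out with hΓR
    have hΓRsub : ΓR ⊆ R := by
      intro t ht
      rw [hΓR, Finset.mem_image] at ht
      obtain ⟨p, hpCR, rfl⟩ := ht
      obtain ⟨x, y, hxy, hyx, hpeq⟩ := hPmem p (hCR hpCR)
      subst hpeq
      have hout : Sym2.mk.uncurry (Quot.out (Sym2.mk.uncurry (x, y))) = Sym2.mk.uncurry (x, y) :=
        Quot.out_eq _
      rcases Sym2.mk_eq_mk_iff.mp hout with h | h
      · rw [h]; exact hxy
      · rw [h]; exact hyx
    have hcont : ¬ ∃ a b, a ∈ A \ CL ∧ (a, b) ∈ R \ ΓR ∧ (b, a) ∈ R \ ΓR := by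
      rintro ⟨a, b, ha, hab, hba⟩
      rw [Finset.mem_sdiff] at ha hab hba
      have hpP : Sym2.mk.uncurry (a, b) ∈ P := by
        rw [hP, Finset.mem_image]
        exact ⟨(a, b), Finset.mem_filter.mpr ⟨hab.1, hba.1⟩, rfl⟩
      rcases hcov a ha.1 (Sym2.mk.uncurry (a, b)) hpP (by simp) with h | h
      · exact ha.2 h
      · have : Quot.out (Sym2.mk.uncurry (a, b)) ∈ ΓR := by
          rw [hΓR]; exact Finset.mem_image_of_mem _ h
        have hout : Sym2.mk.uncurry (Quot.out (Sym2.mk.uncurry (a, b))) = Sym2.mk.uncurry (a, b) :=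
          Quot.out_eq _
        rcases Sym2.mk_eq_mk_iff.mp hout with heq | heq
        · rw [heq] at this; exact hab.2 this
        · rw [heq] at this; exact hba.2 this
    have hmem : CL.card + ΓR.card ∈ {c : ℕ | ∃ (ΓA : Finset α) (ΓR : Finset (α × α)),
        ΓA ⊆ A ∧ ΓR ⊆ R ∧
        (¬ ∃ a b, a ∈ A \ ΓA ∧ (a, b) ∈ R \ ΓR ∧ (b, a) ∈ R \ ΓR) ∧
        ΓA.card + ΓR.card = c} := ⟨CL, ΓR, hCL, hΓRsub, hcont, rfl⟩
    calc sInf _ ≤ CL.card + ΓR.card := Nat.sInf_le hmem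
      _ ≤ CL.card + CR.card := by
          exact Nat.add_le_add_left (Finset.card_image_le) _
      _ = _ := hc
  · -- vertex cover ≤ resilience
    obtain ⟨ΓA, ΓR, hΓA, hΓR, hcont, hc⟩ := Nat.sInf_mem hS1ne
    set CR : Finset (Sym2 α) := (ΓR.image Sym2.mk.uncurry) ∩ P with hCRdef
    have hCRsub : CR ⊆ P := Finset.inter_subset_right
    have hcov : ∀ a ∈ A, ∀ p ∈ P, a ∈ p → a ∈ ΓA ∨ p ∈ CR := by
      intro a ha p hp hap
      by_cases haΓ : a ∈ ΓA
      · exact Or.inl haΓ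
      right
      obtain ⟨x, y, hxy, hyx, rfl⟩ := hPmem p hp
      rcases Sym2.mem_iff.mp hap with rfl | rfl
      · -- a = x, witness b := y
        have : (a, y) ∈ ΓR ∨ (y, a) ∈ ΓR := by
          by_contra hcon
          push_neg at hcon
          exact hcont ⟨a, y, Finset.mem_sdiff.mpr ⟨ha, haΓ⟩,
            Finset.mem_sdiff.mpr ⟨hxy, hcon.1⟩, Finset.mem_sdiff.mpr ⟨hyx, hcon.2⟩⟩
        rw [hCRdef, Finset.mem_inter]
        refine ⟨?_, hp⟩
        rcases this with h | h
        · exact Finset.mem_image_of_mem _ h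
        · have := Finset.mem_image_of_mem Sym2.mk.uncurry h
          rwa [show Sym2.mk.uncurry (y, a) = Sym2.mk.uncurry (a, y) from Sym2.eq_swap] at this
      · -- a = y, witness b := x
        have : (a, x) ∈ ΓR ∨ (x, a) ∈ ΓR := by
          by_contra hcon
          push_neg at hcon
          exact hcont ⟨a, x, Finset.mem_sdiff.mpr ⟨ha, haΓ⟩,
            Finset.mem_sdiff.mpr ⟨hyx, hcon.1⟩, Finset.mem_sdiff.mpr ⟨hxy, hcon.2⟩⟩
        rw [hCRdef, Finset.mem_inter]
        refine ⟨?_, hp⟩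
        rcases this with h | h
        · have := Finset.mem_image_of_mem Sym2.mk.uncurry h
          rwa [show Sym2.mk.uncurry (a, x) = Sym2.mk.uncurry (x, a) from Sym2.eq_swap] at this
        · exact Finset.mem_image_of_mem _ h
    have hmem : ΓA.card + CR.card ∈ {c : ℕ | ∃ (CL : Finset α) (CR : Finset (Sym2 α)),
        CL ⊆ A ∧ CR ⊆ P ∧
        (∀ a ∈ A, ∀ p ∈ P, a ∈ p → a ∈ CL ∨ p ∈ CR) ∧
        CL.card + CR.card = c} := ⟨ΓA, CR, hΓA, hCRsub, hcov, rfl⟩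
    calc sInf _ ≤ ΓA.card + CR.card := Nat.sInf_le hmem
      _ ≤ ΓA.card + ΓR.card := by
          refine Nat.add_le_add_left ?_ _
          exact le_trans (Finset.card_le_card Finset.inter_subset_left)
            Finset.card_image_le
      _ = _ := hc
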